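/- There exist a real number λ > α·(α - 1) and a vector v ∈ CN with v_m = 1 such that A·v = λ·v; in particular A has a real eigenvalue strictly greater than α·(α - 1) with an eigenvector whose coordinates are nonnegative and nondecreasing. -/

import Mathlib

/-- From adjacent inequalities to full monotonicity on `Fin N`. -/
lemma monoOfAdj {N : ℕ} (f : Fin N → ℝ)
    (h : ∀ (k : ℕ) (hk : k + 1 < N), f ⟨k, Nat.lt_of_succ_lt hk⟩ ≤ f ⟨k + 1, hk⟩) :
    ∀ i j : Fin N, i ≤ j → f i ≤ f j := by
  have H : ∀ (d : ℕ) (i j : Fin N), i.val + d = j.val → f i ≤ f j := by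
    intro d
    induction d with
    | zero =>
      intro i j hij
      have : i = j := Fin.ext (by omega)
      rw [this]
    | succ d ih =>
      intro i j hij
      have hj := j.isLt
      have hk : i.val + d + 1 < N := by omega
      have h1 : f i ≤ f ⟨i.val + d, Nat.lt_of_succ_lt hk⟩ := ih i _ rfl
      have h2 : f ⟨i.val + d, Nat.lt_of_succ_lt hk⟩ ≤ f ⟨i.val + d + 1, hk⟩ := h _ hk
      have : j = ⟨i.val + d + 1, hk⟩ := Fin.ext (by simp only [Fin.val_mk]; omega)
      rw [this]
      exact h1.trans h2
  intro i j hij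
  exact H (j.val - i.val) i j (by have := Fin.le_def.mp hij; omega)

set_option maxHeartbeats 4000000 in
theorem stmt1 (n m : ℕ) (hn : 2 ≤ n) (hm : m = 2 ^ (n - 1))
    (α : ℝ) (hα : 1 < α)
    (β : Fin m → ℝ)
    (hβ0 : ∀ i : Fin m, i.val = 0 → 1 < β i)
    (hβmono : ∀ i j : Fin m, i < j → β i < β j)
    (hβlast : ∀ i : Fin m, i.val = m - 1 → β i = α)
    (A : Matrix (Fin m) (Fin m) ℝ)
    (hA : ∀ i j : Fin m,
      A i j = if j.val = m / 2 - (i.val + 2) / 2 then -α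
              else if j.val = m / 2 + (i.val + 2) / 2 - 1 then α * β i
              else 0) :
    ∃ lam : ℝ, α * (α - 1) < lam ∧
      ∃ v : Fin m → ℝ,
        (∀ i : Fin m, i.val = m - 1 → v i = 1) ∧
        (∀ i : Fin m, 0 ≤ v i) ∧
        (∀ i j : Fin m, i ≤ j → v i ≤ v j) ∧
        A.mulVec v = lam • v := by
  -- basic numerics
  have hαpos : (0:ℝ) < α := by linarith
  have hm2 : 2 ≤ m := by
    have h1 : 1 ≤ n - 1 := by omega
    have h2 : 2 ^ 1 ≤ 2 ^ (n-1) := Nat.pow_le_pow_right (by norm_num) h1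
    omega
  have hme : m % 2 = 0 := by
    obtain ⟨k, hk⟩ : ∃ k, n - 1 = k + 1 := ⟨n - 2, by omega⟩
    rw [hm, hk, pow_succ]
    omega
  obtain ⟨lastI, hlastI⟩ : ∃ l : Fin m, l.val = m - 1 := ⟨⟨m - 1, by omega⟩, rfl⟩
  obtain ⟨zeroI, hzeroI⟩ : ∃ l : Fin m, l.val = 0 := ⟨⟨0, by omega⟩, rfl⟩
  have hβle : ∀ i j : Fin m, i ≤ j → β i ≤ β j := by
    intro i j hij
    rcases lt_or_eq_of_le hij with h | h
    · exact (hβmono i j h).le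
    · rw [h]
  have hβ1 : ∀ i : Fin m, 1 < β i := by
    intro i
    have h0 : 1 < β zeroI := hβ0 zeroI hzeroI
    have : β zeroI ≤ β i := hβle zeroI i (by rw [Fin.le_def]; omega)
    linarith
  have hβlastα : β lastI = α := hβlast lastI hlastI
  -- the key coordinate formula for A.mulVec
  have key : ∀ (v : Fin m → ℝ) (i : Fin m), ∃ q p : Fin m,
      q.val = m / 2 - (i.val + 2) / 2 ∧ p.val = m / 2 + (i.val + 2) / 2 - 1 ∧
      A.mulVec v i = α * β i * v p - α * v q := by
    intro v i
    have hi := i.isLt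
    have hqlt : m / 2 - (i.val + 2) / 2 < m := by omega
    have hplt : m / 2 + (i.val + 2) / 2 - 1 < m := by omega
    refine ⟨⟨_, hqlt⟩, ⟨_, hplt⟩, rfl, rfl, ?_⟩
    have hne : m / 2 - (i.val + 2) / 2 ≠ m / 2 + (i.val + 2) / 2 - 1 := by omega
    have hmv : A.mulVec v i = ∑ j : Fin m, A i j * v j := by
      simp [Matrix.mulVec, dotProduct]
    rw [hmv]
    have hsplit : ∀ j : Fin m, A i j * v j =
        (if j = (⟨_, hqlt⟩ : Fin m) then (-α) * v j else 0)
        + (if j = (⟨_, hplt⟩ : Fin m) then (α * β i) * v j else 0) := by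
      intro j
      rw [hA i j]
      by_cases h1 : (j : ℕ) = m / 2 - (i.val + 2) / 2
      · have hj1 : j = (⟨_, hqlt⟩ : Fin m) := Fin.ext h1
        have h2 : ¬ (j : ℕ) = m / 2 + (i.val + 2) / 2 - 1 := by omega
        have hj2 : ¬ j = (⟨_, hplt⟩ : Fin m) := fun hh => h2 (by rw [hh])
        rw [if_pos h1, if_pos hj1, if_neg hj2]
        ring
      · have hj1 : ¬ j = (⟨_, hqlt⟩ : Fin m) := fun hh => h1 (by rw [hh])
        by_cases h2 : (j : ℕ) = m / 2 + (i.val + 2) / 2 - 1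
        · have hj2 : j = (⟨_, hplt⟩ : Fin m) := Fin.ext h2
          rw [if_neg h1, if_pos h2, if_neg hj1, if_pos hj2]
          ring
        · have hj2 : ¬ j = (⟨_, hplt⟩ : Fin m) := fun hh => h2 (by rw [hh])
          rw [if_neg h1, if_neg h2, if_neg hj1, if_neg hj2]
          ring
    calc ∑ j : Fin m, A i j * v j
        = ∑ j : Fin m, ((if j = (⟨_, hqlt⟩ : Fin m) then (-α) * v j else 0)
          + (if j = (⟨_, hplt⟩ : Fin m) then (α * β i) * v j else 0)) :=
          Finset.sum_congr rfl (fun j _ => hsplit j)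
      _ = (∑ j : Fin m, if j = (⟨_, hqlt⟩ : Fin m) then (-α) * v j else 0)
          + ∑ j : Fin m, if j = (⟨_, hplt⟩ : Fin m) then (α * β i) * v j else 0 :=
          Finset.sum_add_distrib
      _ = (-α) * v ⟨_, hqlt⟩ + (α * β i) * v ⟨_, hplt⟩ := by
          rw [Finset.sum_ite_eq', Finset.sum_ite_eq']
          simp
      _ = α * β i * v ⟨_, hplt⟩ - α * v ⟨_, hqlt⟩ := by ring
  -- A preserves the cone
  have coneA : ∀ v : Fin m → ℝ, (∀ i, 0 ≤ v i) → (∀ i j : Fin m, i ≤ j → v i ≤ v j) →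
      (∀ i, 0 ≤ A.mulVec v i) ∧ (∀ i j : Fin m, i ≤ j → A.mulVec v i ≤ A.mulVec v j) := by
    intro v hv hvm
    constructor
    · intro i
      obtain ⟨q, p, hq, hp, hform⟩ := key v i
      have hqp : q ≤ p := by rw [Fin.le_def]; omega
      have h1 : v q ≤ v p := hvm q p hqp
      have h2 : 0 ≤ v p := hv p
      have h3 : 1 < β i := hβ1 i
      rw [hform]
      have e1 : v q ≤ β i * v p := h1.trans (le_mul_of_one_le_left h2 h3.le)
      have e2 : α * v q ≤ α * (β i * v p) := mul_le_mul_of_nonneg_left e1 hαpos.le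
      linarith
    · refine monoOfAdj _ ?_
      intro k hk
      obtain ⟨q, p, hq, hp, hform⟩ := key v ⟨k, Nat.lt_of_succ_lt hk⟩
      obtain ⟨q', p', hq', hp', hform'⟩ := key v ⟨k + 1, hk⟩
      rw [hform, hform']
      have h1 : v q' ≤ v q := hvm q' q (by rw [Fin.le_def]; simp only [Fin.val_mk] at hq hq'; omega)
      have h2 : v p ≤ v p' := hvm p p' (by rw [Fin.le_def]; simp only [Fin.val_mk] at hp hp'; omega)
      have h3 : β ⟨k, Nat.lt_of_succ_lt hk⟩ ≤ β ⟨k + 1, hk⟩ := hβle _ _ (by rw [Fin.le_def]; simp)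
      have h4 : 1 < β ⟨k, Nat.lt_of_succ_lt hk⟩ := hβ1 _
      have h5 : 0 ≤ v p := hv p
      have e1 : β ⟨k, Nat.lt_of_succ_lt hk⟩ * v p ≤ β ⟨k + 1, hk⟩ * v p' :=
        mul_le_mul h3 h2 h5 (by linarith [hβ1 ⟨k + 1, hk⟩])
      have e2 : α * (β ⟨k, Nat.lt_of_succ_lt hk⟩ * v p) ≤ α * (β ⟨k + 1, hk⟩ * v p') :=
        mul_le_mul_of_nonneg_left e1 hαpos.le
      have e3 : α * v q' ≤ α * v q := mul_le_mul_of_nonneg_left h1 hαpos.le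
      linarith
  -- the last row
  have lastRow : ∀ v : Fin m → ℝ, A.mulVec v lastI = α * α * v lastI - α * v zeroI := by
    intro v
    obtain ⟨q, p, hq, hp, hform⟩ := key v lastI
    have hq0 : q = zeroI := Fin.ext (by omega)
    have hpl : p = lastI := Fin.ext (by have := lastI.isLt; omega)
    rw [hform, hq0, hpl, hβlastα]
  -- support doubling: positivity spreads from the last coordinate
  have doubling : ∀ (k : ℕ) (v : Fin m → ℝ), (∀ i, 0 ≤ v i) →
      (∀ i j : Fin m, i ≤ j → v i ≤ v j) → 0 < v lastI →
      (∀ i, 0 ≤ (A ^ k).mulVec v i) ∧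
      (∀ i j : Fin m, i ≤ j → (A ^ k).mulVec v i ≤ (A ^ k).mulVec v j) ∧
      (∀ i : Fin m, m ≤ i.val + 2 ^ k → 0 < (A ^ k).mulVec v i) := by
    intro k
    induction k with
    | zero =>
      intro v hv hvm hvl
      rw [pow_zero]
      simp only [Matrix.one_mulVec]
      refine ⟨hv, hvm, ?_⟩
      intro i hi
      have : i = lastI := Fin.ext (by have := i.isLt; omega)
      rw [this]; exact hvl
    | succ k ih =>
      intro v hv hvm hvl
      obtain ⟨hw0, hwm, hwp⟩ := ih v hv hvm hvl
      have hrw : (A ^ (k+1)).mulVec v = A.mulVec ((A ^ k).mulVec v) := by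
        rw [Matrix.mulVec_mulVec, ← pow_succ']
      rw [hrw]
      obtain ⟨hc1, hc2⟩ := coneA _ hw0 hwm
      refine ⟨hc1, hc2, ?_⟩
      intro i hi
      obtain ⟨q, p, hq, hp, hform⟩ := key ((A ^ k).mulVec v) i
      have h2k : 2 ^ (k+1) = 2 * 2 ^ k := by rw [pow_succ]; ring
      have hpge : m ≤ p.val + 2 ^ k := by have := i.isLt; omega
      have h1 : 0 < (A ^ k).mulVec v p := hwp p hpge
      have h2 : (A ^ k).mulVec v q ≤ (A ^ k).mulVec v p := hwm q p (by rw [Fin.le_def]; omega)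
      have h3 : 1 < β i := hβ1 i
      rw [hform]
      have e1 : (A ^ k).mulVec v q < β i * (A ^ k).mulVec v p :=
        h2.trans_lt (lt_mul_of_one_lt_left h1 h3)
      have e2 : α * (A ^ k).mulVec v q < α * (β i * (A ^ k).mulVec v p) :=
        mul_lt_mul_of_pos_left e1 hαpos
      linarith
  -- strict interior step: from everywhere-positive to strictly increasing positive
  have strictInt : ∀ v : Fin m → ℝ, (∀ i, 0 ≤ v i) → (∀ i j : Fin m, i ≤ j → v i ≤ v j) →
      (∀ i, 0 < v i) →
      (0 < A.mulVec v zeroI) ∧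
      (∀ (k : ℕ) (hk : k + 1 < m),
        A.mulVec v ⟨k, Nat.lt_of_succ_lt hk⟩ < A.mulVec v ⟨k + 1, hk⟩) := by
    intro v hv hvm hvp
    constructor
    · obtain ⟨q, p, hq, hp, hform⟩ := key v zeroI
      have h1 : v q ≤ v p := hvm q p (by rw [Fin.le_def]; omega)
      have h2 : 0 < v p := hvp p
      have h3 : 1 < β zeroI := hβ1 zeroI
      rw [hform]
      have e1 : v q < β zeroI * v p := h1.trans_lt (lt_mul_of_one_lt_left h2 h3)
      have e2 : α * v q < α * (β zeroI * v p) := mul_lt_mul_of_pos_left e1 hαpos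
      linarith
    · intro k hk
      obtain ⟨q, p, hq, hp, hform⟩ := key v ⟨k, Nat.lt_of_succ_lt hk⟩
      obtain ⟨q', p', hq', hp', hform'⟩ := key v ⟨k + 1, hk⟩
      rw [hform, hform']
      have h1 : v q' ≤ v q := hvm q' q (by rw [Fin.le_def]; simp only [Fin.val_mk] at hq hq'; omega)
      have h2 : v p ≤ v p' := hvm p p' (by rw [Fin.le_def]; simp only [Fin.val_mk] at hp hp'; omega)
      have h3 : β ⟨k, Nat.lt_of_succ_lt hk⟩ < β ⟨k + 1, hk⟩ :=
        hβmono _ _ (by rw [Fin.lt_def]; simp)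
      have h4 : 1 < β ⟨k, Nat.lt_of_succ_lt hk⟩ := hβ1 _
      have h5 : 0 < v p' := hvp p'
      have e0 : β ⟨k, Nat.lt_of_succ_lt hk⟩ * v p ≤ β ⟨k, Nat.lt_of_succ_lt hk⟩ * v p' :=
        mul_le_mul_of_nonneg_left h2 (by linarith)
      have e1 : β ⟨k, Nat.lt_of_succ_lt hk⟩ * v p' < β ⟨k + 1, hk⟩ * v p' :=
        mul_lt_mul_of_pos_right h3 h5
      have e2 : α * (β ⟨k, Nat.lt_of_succ_lt hk⟩ * v p) < α * (β ⟨k + 1, hk⟩ * v p') :=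
        mul_lt_mul_of_pos_left (e0.trans_lt e1) hαpos
      have e3 : α * v q' ≤ α * v q := mul_le_mul_of_nonneg_left h1 hαpos.le
      linarith
  -- the feasible set
  set L : Set (ℝ × (Fin m → ℝ)) := {pv |
    0 ≤ pv.1 ∧ pv.1 ≤ α ^ 2 ∧ (∀ i, 0 ≤ pv.2 i) ∧ (∀ i j : Fin m, i ≤ j → pv.2 i ≤ pv.2 j) ∧
    pv.2 lastI = 1 ∧ (∀ i, pv.1 * pv.2 i ≤ A.mulVec pv.2 i) ∧
    (∀ i j : Fin m, i ≤ j →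
      A.mulVec pv.2 i - pv.1 * pv.2 i ≤ A.mulVec pv.2 j - pv.1 * pv.2 j)} with hLdef
  have hcont1 : ∀ i : Fin m, Continuous (fun pv : ℝ × (Fin m → ℝ) => A.mulVec pv.2 i) := by
    intro i
    have : (fun pv : ℝ × (Fin m → ℝ) => A.mulVec pv.2 i)
        = fun pv => ∑ j : Fin m, A i j * pv.2 j := by
      funext pv
      simp [Matrix.mulVec, dotProduct]
    rw [this]
    exact continuous_finset_sum _ fun j _ =>
      continuous_const.mul ((continuous_apply j).comp continuous_snd)
  have hcont2 : ∀ i : Fin m, Continuous (fun pv : ℝ × (Fin m → ℝ) => pv.1 * pv.2 i) :=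
    fun i => continuous_fst.mul ((continuous_apply i).comp continuous_snd)
  have hLclosed : IsClosed L := by
    have c1 : IsClosed {pv : ℝ × (Fin m → ℝ) | 0 ≤ pv.1} :=
      isClosed_le continuous_const continuous_fst
    have c2 : IsClosed {pv : ℝ × (Fin m → ℝ) | pv.1 ≤ α ^ 2} :=
      isClosed_le continuous_fst continuous_const
    have c3 : IsClosed {pv : ℝ × (Fin m → ℝ) | ∀ i, 0 ≤ pv.2 i} := by
      rw [Set.setOf_forall]
      exact isClosed_iInter fun i =>
        isClosed_le continuous_const ((continuous_apply i).comp continuous_snd)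
    have c4 : IsClosed {pv : ℝ × (Fin m → ℝ) | ∀ i j : Fin m, i ≤ j → pv.2 i ≤ pv.2 j} := by
      rw [Set.setOf_forall]
      refine isClosed_iInter fun i => ?_
      rw [Set.setOf_forall]
      refine isClosed_iInter fun j => ?_
      by_cases hij : i ≤ j
      · have : {pv : ℝ × (Fin m → ℝ) | i ≤ j → pv.2 i ≤ pv.2 j}
            = {pv : ℝ × (Fin m → ℝ) | pv.2 i ≤ pv.2 j} := by
          ext pv; simp [hij]
        rw [this]
        exact isClosed_le ((continuous_apply i).comp continuous_snd)
          ((continuous_apply j).comp continuous_snd)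
      · have : {pv : ℝ × (Fin m → ℝ) | i ≤ j → pv.2 i ≤ pv.2 j} = Set.univ := by
          ext pv; simp [hij]
        rw [this]
        exact isClosed_univ
    have c5 : IsClosed {pv : ℝ × (Fin m → ℝ) | pv.2 lastI = 1} :=
      isClosed_eq ((continuous_apply lastI).comp continuous_snd) continuous_const
    have c6 : IsClosed {pv : ℝ × (Fin m → ℝ) | ∀ i, pv.1 * pv.2 i ≤ A.mulVec pv.2 i} := by
      rw [Set.setOf_forall]
      exact isClosed_iInter fun i => isClosed_le (hcont2 i) (hcont1 i)
    have c7 : IsClosed {pv : ℝ × (Fin m → ℝ) | ∀ i j : Fin m, i ≤ j →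
        A.mulVec pv.2 i - pv.1 * pv.2 i ≤ A.mulVec pv.2 j - pv.1 * pv.2 j} := by
      rw [Set.setOf_forall]
      refine isClosed_iInter fun i => ?_
      rw [Set.setOf_forall]
      refine isClosed_iInter fun j => ?_
      by_cases hij : i ≤ j
      · have : {pv : ℝ × (Fin m → ℝ) | i ≤ j →
            A.mulVec pv.2 i - pv.1 * pv.2 i ≤ A.mulVec pv.2 j - pv.1 * pv.2 j}
            = {pv : ℝ × (Fin m → ℝ) |
              A.mulVec pv.2 i - pv.1 * pv.2 i ≤ A.mulVec pv.2 j - pv.1 * pv.2 j} := by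
          ext pv; simp [hij]
        rw [this]
        exact isClosed_le ((hcont1 i).sub (hcont2 i)) ((hcont1 j).sub (hcont2 j))
      · have : {pv : ℝ × (Fin m → ℝ) | i ≤ j →
            A.mulVec pv.2 i - pv.1 * pv.2 i ≤ A.mulVec pv.2 j - pv.1 * pv.2 j}
            = Set.univ := by
          ext pv; simp [hij]
        rw [this]
        exact isClosed_univ
    have : L = {pv : ℝ × (Fin m → ℝ) | 0 ≤ pv.1} ∩ ({pv | pv.1 ≤ α ^ 2}
        ∩ ({pv | ∀ i, 0 ≤ pv.2 i} ∩ ({pv | ∀ i j : Fin m, i ≤ j → pv.2 i ≤ pv.2 j}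
        ∩ ({pv | pv.2 lastI = 1} ∩ ({pv | ∀ i, pv.1 * pv.2 i ≤ A.mulVec pv.2 i}
        ∩ {pv | ∀ i j : Fin m, i ≤ j →
            A.mulVec pv.2 i - pv.1 * pv.2 i ≤ A.mulVec pv.2 j - pv.1 * pv.2 j}))))) := by
      ext pv
      simp only [hLdef, Set.mem_setOf_eq, Set.mem_inter_iff]
    rw [this]
    exact c1.inter (c2.inter (c3.inter (c4.inter (c5.inter (c6.inter c7)))))
  have hLsub : L ⊆ Set.Icc ((0:ℝ), fun _ : Fin m => (0:ℝ)) (α ^ 2, fun _ => 1) := by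
    rintro ⟨lam, v⟩ ⟨h1, h2, h3, h4, h5, _, _⟩
    constructor
    · exact ⟨h1, fun i => h3 i⟩
    · refine ⟨h2, fun i => ?_⟩
      have : v i ≤ v lastI := h4 i lastI (by rw [Fin.le_def]; have := i.isLt; omega)
      exact this.trans (le_of_eq h5)
  have hLcompact : IsCompact L := IsCompact.of_isClosed_subset isCompact_Icc hLclosed hLsub
  have hLne : L.Nonempty := by
    refine ⟨(0, fun _ => 1), ?_⟩
    simp only [hLdef, Set.mem_setOf_eq]
    refine ⟨le_refl _, by positivity, fun i => by norm_num, fun i j _ => le_refl _, by norm_num, ?_, ?_⟩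
    · intro i
      obtain ⟨q, p, hq, hp, hform⟩ := key (fun _ => (1:ℝ)) i
      rw [hform]
      have := hβ1 i
      nlinarith
    · intro i j hij
      obtain ⟨q, p, hq, hp, hform⟩ := key (fun _ => (1:ℝ)) i
      obtain ⟨q', p', hq', hp', hform'⟩ := key (fun _ => (1:ℝ)) j
      rw [hform, hform']
      have := hβle i j hij
      nlinarith
  obtain ⟨⟨lam, v⟩, hmemL, hmax⟩ := hLcompact.exists_isMaxOn hLne continuous_fst.continuousOn
  have hmem := hmemL
  rw [hLdef, Set.mem_setOf_eq] at hmem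
  obtain ⟨hl0, hlα, hv0, hvmono, hvlast, hw0, hwmono⟩ := hmem
  dsimp only at hl0 hlα hv0 hvmono hvlast hw0 hwmono
  by_cases hweq : ∀ i, A.mulVec v i = lam * v i
  · -- the maximizer is an eigenvector
    have heq : lam = α * α - α * v zeroI := by
      have h0 := hweq lastI
      rw [lastRow v, hvlast] at h0
      linarith
    refine ⟨lam, ?_, v, ?_, hv0, hvmono, ?_⟩
    · have hvz1 : v zeroI < 1 := by
        by_contra hge
        push_neg at hge
        have hall : ∀ i, v i = 1 := by
          intro i
          have h1 : v zeroI ≤ v i := hvmono zeroI i (Fin.le_def.mpr (by omega))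
          have h2 : v i ≤ v lastI := hvmono i lastI (Fin.le_def.mpr (by have := i.isLt; omega))
          rw [hvlast] at h2
          linarith
        obtain ⟨q, p, hq, hp, hform⟩ := key v zeroI
        have h0 := hweq zeroI
        rw [hform, hall p, hall q, hall zeroI] at h0
        have hβz : β zeroI < α := by
          have := hβmono zeroI lastI (Fin.lt_def.mpr (by omega))
          rw [hβlastα] at this
          exact this
        have hl2 : lam = α * β zeroI - α := by linarith
        rw [hall zeroI] at heq
        have : α * β zeroI < α * α := mul_lt_mul_of_pos_left hβz hαpos
        rw [heq] at hl2
        linarith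
      have : α * v zeroI < α * 1 := mul_lt_mul_of_pos_left hvz1 hαpos
      rw [heq]
      linarith
    · intro i hi
      have : i = lastI := Fin.ext (by omega)
      rw [this]
      exact hvlast
    · funext i
      rw [Pi.smul_apply, smul_eq_mul]
      exact hweq i
  · -- otherwise we can boost lam, contradicting maximality
    exfalso
    push_neg at hweq
    obtain ⟨i0, hi0⟩ := hweq
    have hwlast : 0 < A.mulVec v lastI - lam * v lastI := by
      rcases lt_or_eq_of_le (hw0 lastI) with h | h
      · linarith
      · exfalso
        apply hi0
        have h1 : lam * v i0 ≤ A.mulVec v i0 := hw0 i0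
        have h2 := hwmono i0 lastI (Fin.le_def.mpr (by have := i0.isLt; omega))
        linarith
    obtain ⟨wv, hwvdef⟩ : ∃ w : Fin m → ℝ, w = A.mulVec v - lam • v := ⟨_, rfl⟩
    have hwvco : ∀ i, wv i = A.mulVec v i - lam * v i := by
      intro i
      rw [hwvdef]
      simp [Pi.sub_apply, Pi.smul_apply, smul_eq_mul]
    have hwv0 : ∀ i, 0 ≤ wv i := by
      intro i
      rw [hwvco]
      linarith [hw0 i]
    have hwvm : ∀ i j : Fin m, i ≤ j → wv i ≤ wv j := by
      intro i j hij
      rw [hwvco, hwvco]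
      exact hwmono i j hij
    have hwvl : 0 < wv lastI := by rw [hwvco]; exact hwlast
    obtain ⟨hy10, hy1m, hy1p'⟩ := doubling (n-1) v hv0 hvmono (by rw [hvlast]; norm_num)
    have hy1p : ∀ i, 0 < (A ^ (n-1)).mulVec v i := fun i => hy1p' i (by have := i.isLt; omega)
    obtain ⟨hw10, hw1m, hw1p'⟩ := doubling (n-1) wv hwv0 hwvm hwvl
    have hw1p : ∀ i, 0 < (A ^ (n-1)).mulVec wv i := fun i => hw1p' i (by have := i.isLt; omega)
    obtain ⟨Y, hYdef⟩ : ∃ Y, Y = A.mulVec ((A ^ (n-1)).mulVec v) := ⟨_, rfl⟩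
    obtain ⟨Z, hZdef⟩ : ∃ Z, Z = A.mulVec ((A ^ (n-1)).mulVec wv) := ⟨_, rfl⟩
    obtain ⟨hY0', hYm'⟩ := coneA _ (fun i => (hy1p i).le) hy1m
    obtain ⟨hZ0', hZm'⟩ := coneA _ (fun i => (hw1p i).le) hw1m
    obtain ⟨hZzero', hZadj'⟩ := strictInt _ (fun i => (hw1p i).le) hw1m hw1p
    have hY0 : ∀ i, 0 ≤ Y i := by rw [hYdef]; exact hY0'
    have hYm : ∀ i j : Fin m, i ≤ j → Y i ≤ Y j := by rw [hYdef]; exact hYm'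
    have hZ0 : ∀ i, 0 ≤ Z i := by rw [hZdef]; exact hZ0'
    have hZm : ∀ i j : Fin m, i ≤ j → Z i ≤ Z j := by rw [hZdef]; exact hZm'
    have hZzero : 0 < Z zeroI := by rw [hZdef]; exact hZzero'
    have hZadj : ∀ (k : ℕ) (hk : k + 1 < m), Z ⟨k, Nat.lt_of_succ_lt hk⟩ < Z ⟨k + 1, hk⟩ := by
      rw [hZdef]; exact hZadj'
    have hYlast : 0 < Y lastI := by
      rw [hYdef, lastRow]
      have h1 : (A ^ (n-1)).mulVec v zeroI ≤ (A ^ (n-1)).mulVec v lastI :=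
        hy1m zeroI lastI (Fin.le_def.mpr (by omega))
      have h2 : 0 < (A ^ (n-1)).mulVec v lastI := hy1p lastI
      have e1 : α * (A ^ (n-1)).mulVec v zeroI ≤ α * (A ^ (n-1)).mulVec v lastI :=
        mul_le_mul_of_nonneg_left h1 hαpos.le
      have e2 : α * (A ^ (n-1)).mulVec v lastI
          < α * (α * (A ^ (n-1)).mulVec v lastI) :=
        lt_mul_of_one_lt_left (mul_pos hαpos h2) hα
      linarith
    -- the linear relation Z = A Y - lam Y
    have hstep : (A ^ (n-1)).mulVec wv
        = A.mulVec ((A ^ (n-1)).mulVec v) - lam • ((A ^ (n-1)).mulVec v) := by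
      rw [hwvdef, Matrix.mulVec_sub, Matrix.mulVec_smul, Matrix.mulVec_mulVec, ← pow_succ,
        pow_succ', ← Matrix.mulVec_mulVec]
    have hrelYZ : Z = A.mulVec Y - lam • Y := by
      rw [hZdef, hstep, Matrix.mulVec_sub, Matrix.mulVec_smul, hYdef]
    -- normalization
    obtain ⟨c0, hc0⟩ : ∃ c : ℝ, c = Y lastI := ⟨_, rfl⟩
    have hc0pos : 0 < c0 := by rw [hc0]; exact hYlast
    have hc0inv : 0 < c0⁻¹ := inv_pos.mpr hc0pos
    obtain ⟨u, hudef⟩ : ∃ u : Fin m → ℝ, u = c0⁻¹ • Y := ⟨_, rfl⟩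
    obtain ⟨z', hz'def⟩ : ∃ z : Fin m → ℝ, z = c0⁻¹ • Z := ⟨_, rfl⟩
    have huco : ∀ i, u i = c0⁻¹ * Y i := by intro i; rw [hudef]; simp
    have hz'co : ∀ i, z' i = c0⁻¹ * Z i := by intro i; rw [hz'def]; simp
    have hu0 : ∀ i, 0 ≤ u i := fun i => by rw [huco]; exact mul_nonneg hc0inv.le (hY0 i)
    have hum : ∀ i j : Fin m, i ≤ j → u i ≤ u j := fun i j hij => by
      rw [huco, huco]; exact mul_le_mul_of_nonneg_left (hYm i j hij) hc0inv.le
    have hulast : u lastI = 1 := by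
      rw [huco, ← hc0]
      exact inv_mul_cancel₀ hc0pos.ne'
    have hule : ∀ i, u i ≤ 1 := by
      intro i
      rw [← hulast]
      exact hum i lastI (Fin.le_def.mpr (by have := i.isLt; omega))
    have hz'0 : ∀ i, 0 ≤ z' i := fun i => by rw [hz'co]; exact mul_nonneg hc0inv.le (hZ0 i)
    have hz'zero : 0 < z' zeroI := by rw [hz'co]; exact mul_pos hc0inv hZzero
    have hz'ge : ∀ i, z' zeroI ≤ z' i := fun i => by
      rw [hz'co, hz'co]
      exact mul_le_mul_of_nonneg_left (hZm zeroI i (Fin.le_def.mpr (by omega))) hc0inv.le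
    have hurel : ∀ i, A.mulVec u i = lam * u i + z' i := by
      have h1 : A.mulVec u = lam • u + z' := by
        rw [hudef, Matrix.mulVec_smul, hz'def, hrelYZ]
        funext j
        simp only [Pi.smul_apply, Pi.add_apply, Pi.sub_apply, smul_eq_mul]
        ring
      intro i
      rw [h1]
      simp [Pi.add_apply, Pi.smul_apply, smul_eq_mul]
    -- the boost amount
    obtain ⟨gp, hgpdef⟩ : ∃ g : Fin m → ℝ,
        g = fun i : Fin m => if h2 : i.val + 1 < m then z' ⟨i.val + 1, h2⟩ - z' i
          else z' zeroI := ⟨_, rfl⟩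
    have hgp : ∀ i, 0 < gp i := by
      intro i
      rw [hgpdef]
      by_cases hc : i.val + 1 < m
      · simp only [dif_pos hc]
        have hadj := hZadj i.val hc
        have hieta : (⟨i.val, Nat.lt_of_succ_lt hc⟩ : Fin m) = i := Fin.ext rfl
        rw [hieta] at hadj
        rw [hz'co, hz'co]
        have := sub_pos.mpr hadj
        nlinarith
      · simp only [dif_neg hc]
        exact hz'zero
    obtain ⟨ε, hεdef⟩ : ∃ e : ℝ,
        e = Finset.inf' Finset.univ (Finset.univ_nonempty_iff.mpr ⟨zeroI⟩) gp := ⟨_, rfl⟩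
    have hεpos : 0 < ε := by
      rw [hεdef, Finset.lt_inf'_iff]
      exact fun i _ => hgp i
    have hεle : ∀ i, ε ≤ gp i := fun i => by
      rw [hεdef]
      exact Finset.inf'_le gp (Finset.mem_univ i)
    have hεz0 : ε ≤ z' zeroI := by
      have h1 := hεle lastI
      rw [hgpdef] at h1
      simp only at h1
      rw [dif_neg (by omega : ¬ lastI.val + 1 < m)] at h1
      exact h1
    -- feasibility of the boosted pair
    have h6 : ∀ i, (lam + ε) * u i ≤ A.mulVec u i := by
      intro i
      rw [hurel i]
      have e1 : ε * u i ≤ ε * 1 := mul_le_mul_of_nonneg_left (hule i) hεpos.le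
      have e2 : z' zeroI ≤ z' i := hz'ge i
      nlinarith
    have h7 : ∀ i j : Fin m, i ≤ j →
        A.mulVec u i - (lam + ε) * u i ≤ A.mulVec u j - (lam + ε) * u j := by
      refine monoOfAdj (fun i => A.mulVec u i - (lam + ε) * u i) ?_
      intro k hk
      rw [hurel, hurel]
      have hgpk := hεle ⟨k, Nat.lt_of_succ_lt hk⟩
      rw [hgpdef] at hgpk
      simp only [Fin.val_mk] at hgpk
      rw [dif_pos hk] at hgpk
      have e1 : ε * (u ⟨k + 1, hk⟩ - u ⟨k, Nat.lt_of_succ_lt hk⟩) ≤ ε * 1 :=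
        mul_le_mul_of_nonneg_left
          (by linarith [hule ⟨k + 1, hk⟩, hu0 ⟨k, Nat.lt_of_succ_lt hk⟩]) hεpos.le
      nlinarith
    have hub : lam + ε ≤ α ^ 2 := by
      have h6l := h6 lastI
      rw [hulast, mul_one, lastRow u, hulast] at h6l
      have := hu0 zeroI
      nlinarith
    have hmemb : (lam + ε, u) ∈ L := by
      rw [hLdef, Set.mem_setOf_eq]
      exact ⟨by dsimp only; linarith, hub, hu0, hum, hulast, h6, h7⟩
    have hcontra := isMaxOn_iff.mp hmax _ hmemb
    dsimp only at hcontra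
    linarith
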